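/- arXiv:1312.4182 — 2 statements merged into one kernel-verified Lean document; each statement's English description precedes it below -/
import Mathlib

section
/- Let F be a finite field and x, y ∈ F^n. Then there exists a string z ∈ F^n such that the Hamming distance Δ(x+z, x) ≥ Δ(x+z, y), and for every j ≤ n, the Hamming weight of the prefix (z_1, …, z_j) is at most (j+1)/2. -/
/-- For a finite field `F` and strings `x, y ∈ F^n` there exists `z ∈ F^n` with
`Δ(x+z, x) ≥ Δ(x+z, y)` and, for every `j ≤ n`, the Hamming weight of the prefix
`(z_1, …, z_j)` is at most `(j+1)/2`. -/
theorem stmt0 {F : Type*} [Field F] [Fintype F] [DecidableEq F] (n : ℕ)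
    (x y : Fin n → F) :
    ∃ z : Fin n → F,
      hammingDist (x + z) y ≤ hammingDist (x + z) x ∧
      ∀ j : ℕ, j ≤ n →
        2 * (Finset.univ.filter (fun i : Fin n => (i : ℕ) < j ∧ z i ≠ 0)).card ≤ j + 1 := by
  classical
  set d : Fin n → F := fun i => y i - x i with hd
  let rk : Fin n → ℕ := fun i =>
    (Finset.univ.filter (fun i' : Fin n => (i' : ℕ) < (i : ℕ) ∧ d i' ≠ 0)).card
  set z : Fin n → F := fun i => if d i ≠ 0 ∧ Even (rk i) then d i else 0 with hz
  have hzne : ∀ i, z i ≠ 0 ↔ (d i ≠ 0 ∧ Even (rk i)) := by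
    intro i
    simp only [hz]
    by_cases h : d i ≠ 0 ∧ Even (rk i)
    · simp [h, h.1]
    · simp [h]
  let f : ℕ → ℕ := fun j =>
    (Finset.univ.filter (fun i : Fin n => (i : ℕ) < j ∧ z i ≠ 0)).card
  let g : ℕ → ℕ := fun j =>
    (Finset.univ.filter (fun i : Fin n => (i : ℕ) < j ∧ d i ≠ 0)).card
  -- splitting lemma
  have hsplit : ∀ (j : ℕ) (hjn : j < n) (P : Fin n → Prop) (_ : DecidablePred P),
      (Finset.univ.filter (fun i : Fin n => (i : ℕ) < j + 1 ∧ P i)).card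
        = (Finset.univ.filter (fun i : Fin n => (i : ℕ) < j ∧ P i)).card
          + (if P ⟨j, hjn⟩ then 1 else 0) := by
    intro j hjn P _
    by_cases hPe : P ⟨j, hjn⟩
    · rw [if_pos hPe]
      have : (Finset.univ.filter (fun i : Fin n => (i : ℕ) < j + 1 ∧ P i))
          = insert ⟨j, hjn⟩ (Finset.univ.filter (fun i : Fin n => (i : ℕ) < j ∧ P i)) := by
        ext i
        simp only [Finset.mem_insert, Finset.mem_filter, Finset.mem_univ, true_and]
        constructor
        · rintro ⟨hlt, hP⟩
          rcases Nat.lt_succ_iff_lt_or_eq.mp hlt with h | h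
          · exact Or.inr ⟨h, hP⟩
          · exact Or.inl (Fin.ext h)
        · rintro (rfl | ⟨h, hP⟩)
          · exact ⟨Nat.lt_succ_self j, hPe⟩
          · exact ⟨Nat.lt_succ_of_lt h, hP⟩
      rw [this, Finset.card_insert_of_notMem]
      simp
    · rw [if_neg hPe]
      have : (Finset.univ.filter (fun i : Fin n => (i : ℕ) < j + 1 ∧ P i))
          = (Finset.univ.filter (fun i : Fin n => (i : ℕ) < j ∧ P i)) := by
        ext i
        simp only [Finset.mem_filter, Finset.mem_univ, true_and]
        constructor
        · rintro ⟨hlt, hP⟩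
          rcases Nat.lt_succ_iff_lt_or_eq.mp hlt with h | h
          · exact ⟨h, hP⟩
          · exact absurd hP (by rwa [show i = ⟨j, hjn⟩ from Fin.ext h])
        · rintro ⟨h, hP⟩
          exact ⟨Nat.lt_succ_of_lt h, hP⟩
      rw [this]
      simp
  have key : ∀ j, j ≤ n → f j = (g j + 1) / 2 := by
    intro j
    induction j with
    | zero => intro _; simp [f, g]
    | succ j ih =>
      intro hj
      have hjn : j < n := hj
      have ihv := ih (le_of_lt hjn)
      have hfs := hsplit j hjn (fun i => z i ≠ 0) (by infer_instance)
      have hgs := hsplit j hjn (fun i => d i ≠ 0) (by infer_instance)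
      have hrk : rk ⟨j, hjn⟩ = g j := rfl
      have hzc : (z ⟨j, hjn⟩ ≠ 0) ↔ (d ⟨j, hjn⟩ ≠ 0 ∧ Even (g j)) := by
        rw [hzne, hrk]
      show f (j+1) = (g (j+1) + 1) / 2
      have hf1 : f (j + 1) = f j + (if z ⟨j, hjn⟩ ≠ 0 then 1 else 0) := hfs
      have hg1 : g (j + 1) = g j + (if d ⟨j, hjn⟩ ≠ 0 then 1 else 0) := hgs
      by_cases hde : d ⟨j, hjn⟩ ≠ 0
      · by_cases hev : Even (g j)
        · rw [hf1, hg1, if_pos (hzc.mpr ⟨hde, hev⟩), if_pos hde, ihv]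
          rw [Nat.even_iff] at hev; omega
        · rw [hf1, hg1, if_neg (fun h => hev (hzc.mp h).2), if_pos hde, ihv]
          rw [Nat.even_iff] at hev; omega
      · rw [hf1, hg1, if_neg (fun h => hde (hzc.mp h).1), if_neg hde, ihv]; omega
  refine ⟨z, ?_, ?_⟩
  · -- hammingDist (x+z) x = f n
    have hxz : hammingDist (x + z) x = f n := by
      show (Finset.univ.filter fun i => (x + z) i ≠ x i).card = _
      congr 1
      ext i
      simp [i.is_lt, sub_eq_zero]
    have hxy : hammingDist (x + z) y = g n - f n := by
      show (Finset.univ.filter fun i => (x + z) i ≠ y i).card = _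
      have hset : (Finset.univ.filter fun i : Fin n => (x + z) i ≠ y i)
          = (Finset.univ.filter fun i : Fin n => (i : ℕ) < n ∧ d i ≠ 0) \
            (Finset.univ.filter fun i : Fin n => (i : ℕ) < n ∧ z i ≠ 0) := by
        ext i
        simp only [Finset.mem_sdiff, Finset.mem_filter, Finset.mem_univ, true_and,
          i.is_lt, true_and, Pi.add_apply]
        have hdi : x i + z i ≠ y i ↔ z i ≠ d i := by
          constructor
          · intro h h'; apply h; rw [h', hd]; ring
          · intro h h'; apply h; rw [hd]; linear_combination h'
        rw [hdi, hzne]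
        by_cases h0 : d i = 0
        · simp [h0, hz, rk]
        · by_cases hev : Even (rk i)
          · simp only [hz]; simp [h0, hev, eq_comm]
          · simp only [hz]; simp [h0, hev, eq_comm]
      rw [hset, Finset.card_sdiff_of_subset]
      intro i hi
      simp only [Finset.mem_filter, Finset.mem_univ, true_and] at hi ⊢
      exact ⟨hi.1, ((hzne i).mp hi.2).1⟩
    rw [hxz, hxy, key n le_rfl]
    omega
  · intro j hj
    have := key j hj
    show 2 * f j ≤ j + 1
    have hgle : g j ≤ j := by
      calc g j ≤ (Finset.univ.filter (fun i : Fin n => (i : ℕ) < j)).card :=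
            Finset.card_le_card (by intro i hi; simp only [Finset.mem_filter] at *; tauto)
        _ ≤ j := by
            classical
            calc (Finset.univ.filter (fun i : Fin n => (i : ℕ) < j)).card
                ≤ (Finset.range j).card := by
                  exact Finset.card_le_card_of_injOn (fun i => (i : ℕ))
                    (fun i hi => by simp only [Finset.mem_coe, Finset.mem_filter] at hi; simpa using hi.2)
                    (fun a _ b _ h => Fin.ext h)
              _ = j := Finset.card_range j
    omega
end

section
/- Let F be a finite field and x, y ∈ F^n with Δ(x, y) = d even. Then there exists z ∈ F^n such that Δ(x+z, x) ≥ Δ(x+z, y) and for every j ≤ n, the Hamming weight of the prefix (z_1, …, z_j) is at most j/2. -/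
/-- For a finite field `F` and `x, y ∈ F^n` with `Δ(x,y)` even, there exists `z ∈ F^n` with
`Δ(x+z, x) ≥ Δ(x+z, y)` and, for every `j ≤ n`, the Hamming weight of the prefix
`(z_1, …, z_j)` is at most `j/2`. -/
theorem stmt1 {F : Type*} [Field F] [Fintype F] [DecidableEq F] (n : ℕ)
    (x y : Fin n → F) (hEven : Even (hammingDist x y)) :
    ∃ z : Fin n → F,
      hammingDist (x + z) y ≤ hammingDist (x + z) x ∧
      ∀ j : ℕ, j ≤ n →
        2 * (Finset.univ.filter (fun i : Fin n => (i : ℕ) < j ∧ z i ≠ 0)).card ≤ j := by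
  classical
  set S : Finset (Fin n) := Finset.univ.filter (fun i => x i ≠ y i) with hS
  obtain ⟨m, hm⟩ := hEven
  have hd : S.card = m + m := by
    have : hammingDist x y = S.card := rfl
    omega
  -- rank of i : number of elements of S that are ≤ i
  set rk : Fin n → ℕ := fun i => (S.filter (fun s => s ≤ i)).card with hrk
  have rk_mono : ∀ a b : Fin n, b ∈ S → a < b → rk a < rk b := by
    intro a b hb hab
    apply Finset.card_lt_card
    constructor
    · intro s hs
      simp only [Finset.mem_filter] at hs ⊢
      exact ⟨hs.1, le_trans hs.2 hab.le⟩
    · intro hsub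
      have : b ∈ S.filter (fun s => s ≤ a) := hsub (by simp [hb])
      simp only [Finset.mem_filter] at this
      exact absurd this.2 (not_le.mpr hab)
  have rk_injOn : ∀ a ∈ S, ∀ b ∈ S, rk a = rk b → a = b := by
    intro a ha b hb hab
    rcases lt_trichotomy a b with h | h | h
    · exact absurd hab (rk_mono a b hb h).ne
    · exact h
    · exact absurd hab.symm (rk_mono b a ha h).ne
  have rk_pos : ∀ i ∈ S, 1 ≤ rk i := by
    intro i hi
    have : i ∈ S.filter (fun s => s ≤ i) := by simp [hi]
    exact Finset.card_pos.mpr ⟨i, this⟩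
  have rk_le : ∀ i : Fin n, rk i ≤ m + m := by
    intro i
    calc rk i ≤ S.card := Finset.card_le_card (Finset.filter_subset _ _)
    _ = m + m := hd
  set T : Finset (Fin n) := S.filter (fun i => m < rk i) with hT
  have hTsub : T ⊆ S := Finset.filter_subset _ _
  -- |T| ≤ m
  have hTle : T.card ≤ m := by
    have : T.card ≤ (Finset.Ioc m (m + m)).card := by
      apply Finset.card_le_card_of_injOn rk
      · intro a ha
        simp only [hT, Finset.mem_coe, Finset.mem_filter] at ha
        exact Finset.mem_Ioc.mpr ⟨ha.2, rk_le a⟩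
      · intro a ha b hb
        exact rk_injOn a (hTsub ha) b (hTsub hb)
    simpa using this
  -- Low set
  set L : Finset (Fin n) := S.filter (fun i => ¬ m < rk i) with hL
  have hLT : L.card + T.card = S.card := by
    have := Finset.card_filter_add_card_filter_not (s := S) (p := fun i => m < rk i)
    rw [hL, hT, add_comm]
    exact this
  have hLle : L.card ≤ m := by
    have : L.card ≤ (Finset.Icc 1 m).card := by
      apply Finset.card_le_card_of_injOn rk
      · intro a ha
        simp only [hL, Finset.mem_coe, Finset.mem_filter, not_lt] at ha
        exact Finset.mem_Icc.mpr ⟨rk_pos a ha.1, ha.2⟩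
      · intro a ha b hb
        have ha' : a ∈ S := Finset.mem_of_mem_filter _ ha
        have hb' : b ∈ S := Finset.mem_of_mem_filter _ hb
        exact rk_injOn a ha' b hb'
    simpa using this
  have hTge : m ≤ T.card := by omega
  have hLge : m ≤ L.card := by omega
  -- define z
  refine ⟨fun i => if i ∈ T then y i - x i else 0, ?_, ?_⟩
  · -- distance claim
    have h1 : (Finset.univ.filter fun i =>
        (x + fun i => if i ∈ T then y i - x i else 0) i ≠ x i) = T := by
      ext i
      by_cases hi : i ∈ T
      · have hxy : x i ≠ y i := by
          have := hTsub hi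
          simpa [hS] using this
        simp [hi, sub_ne_zero.mpr (Ne.symm hxy)]
      · simp [hi]
    have h2 : (Finset.univ.filter fun i =>
        (x + fun i => if i ∈ T then y i - x i else 0) i ≠ y i) = S \ T := by
      ext i
      by_cases hi : i ∈ T
      · simp [hi]
      · simp [hi, Finset.mem_sdiff, hS, sub_ne_zero, ne_comm]
    have e1 : hammingDist (x + fun i => if i ∈ T then y i - x i else 0) x = T.card := by
      rw [hammingDist]; rw [h1]
    have e2 : hammingDist (x + fun i => if i ∈ T then y i - x i else 0) y = (S \ T).card := by
      rw [hammingDist]; rw [h2]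
    rw [e1, e2, Finset.card_sdiff_of_subset hTsub]
    omega
  · -- prefix claim
    intro j hj
    have hset : (Finset.univ.filter fun i : Fin n =>
        (i : ℕ) < j ∧ (if i ∈ T then y i - x i else 0) ≠ 0) =
        Finset.filter (fun i : Fin n => (i : ℕ) < j) T := by
      ext i
      by_cases hi : i ∈ T
      · have hxy : x i ≠ y i := by
          have := hTsub hi
          simpa [hS] using this
        simp [hi, sub_ne_zero.mpr (Ne.symm hxy)]
      · simp [hi]
    rw [hset]
    set Tj := Finset.filter (fun i : Fin n => (i : ℕ) < j) T with hTj
    by_cases ht : Tj = ∅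
    · simp [ht]
    · obtain ⟨i₀, hi₀⟩ := Finset.nonempty_of_ne_empty ht
      -- all elements of L are < j
      have hLj : ∀ s ∈ L, (s : ℕ) < j := by
        intro s hs
        simp only [hL, Finset.mem_filter, not_lt] at hs
        simp only [hTj, hT, Finset.mem_filter] at hi₀
        -- s ≤ i₀ since otherwise rk s > rk i₀ > m
        by_contra hcon
        push_neg at hcon
        have hi0s : i₀ < s := by
          have : (i₀ : ℕ) < (s : ℕ) := lt_of_lt_of_le hi₀.2 hcon
          exact this
        have := rk_mono i₀ s hs.1 hi0s
        omega
      -- L and Tj are disjoint subsets of elements < j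
      have hdisj : Disjoint L Tj := by
        rw [Finset.disjoint_left]
        intro a haL haT
        simp only [hL, Finset.mem_filter, not_lt] at haL
        simp only [hTj, hT, Finset.mem_filter] at haT
        omega
      have hsub2 : L ∪ Tj ⊆ Finset.univ.filter (fun i : Fin n => (i : ℕ) < j) := by
        intro a ha
        rcases Finset.mem_union.mp ha with h | h
        · simp [hLj a h]
        · simp only [hTj, Finset.mem_filter] at h
          simp [h.2]
      have hcardj : (Finset.univ.filter (fun i : Fin n => (i : ℕ) < j)).card ≤ j := by
        have : (Finset.univ.filter (fun i : Fin n => (i : ℕ) < j)).card ≤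
            (Finset.range j).card := by
          apply Finset.card_le_card_of_injOn Fin.val
          · intro a ha
            simp only [Finset.mem_coe, Finset.mem_filter] at ha
            simp [ha.2]
          · intro a _ b _ h
            exact Fin.val_injective h
        simpa using this
      have hunion : L.card + Tj.card ≤ j := by
        rw [← Finset.card_union_of_disjoint hdisj]
        exact le_trans (Finset.card_le_card hsub2) hcardj
      have hTjle : Tj.card ≤ T.card := Finset.card_le_card (Finset.filter_subset _ _)
      omega
end
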